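/- arXiv:1903.05214 — 6 statements merged into one kernel-verified Lean document; each statement's English description precedes it below -/
import Mathlib

section
/- Let X = {x ∈ ℝⁿ : Hₓx ≤ hₓ} and Y = {y ∈ ℝⁿ : H_y y ≤ h_y} be bounded polytopes with X nonempty. If X ⊆ Y, then there exists a nonnegative matrix Λ ∈ ℝ₊^{q_y × q_x} with Λ Hₓ = H_y and Λ hₓ ≤ h_y. -/
open Matrix
open Finset
open scoped RealInnerProductSpace
open scoped InnerProductSpace

section FarkasTools

lemma cone_caratheodory' {ι : Type*} [Fintype ι] {M : Type*} [AddCommGroup M] [Module ℝ M]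
    (v : ι → M) (lam : ι → ℝ) (hlam : ∀ j, 0 ≤ lam j) :
    ∃ (s : Finset ι) (mu : ι → ℝ),
      LinearIndependent ℝ (fun j : {x // x ∈ s} => v j) ∧ (∀ j, 0 ≤ mu j) ∧ (∀ j ∉ s, mu j = 0) ∧
      ∑ j, mu j • v j = ∑ j, lam j • v j := by
  classical
  suffices H : ∀ (s : Finset ι) (lam : ι → ℝ), (∀ j, 0 ≤ lam j) → (∀ j ∉ s, lam j = 0) →
      ∃ (t : Finset ι) (mu : ι → ℝ),
        LinearIndependent ℝ (fun j : {x // x ∈ t} => v j) ∧ (∀ j, 0 ≤ mu j) ∧ (∀ j ∉ t, mu j = 0) ∧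
        ∑ j, mu j • v j = ∑ j, lam j • v j by
    exact H Finset.univ lam hlam (fun j hj => absurd (Finset.mem_univ j) hj)
  intro s
  induction s using Finset.strongInduction with
  | _ s ih =>
    intro lam hlam hsupp
    by_cases hindep : LinearIndependent ℝ (fun j : {x // x ∈ s} => v j)
    · exact ⟨s, lam, hindep, hlam, hsupp, rfl⟩
    · obtain ⟨g, hg0, jne, hjne⟩ := Fintype.not_linearIndependent_iff.mp hindep
      have key : ∀ g : {x // x ∈ s} → ℝ, ∑ j, g j • v j = 0 → (∃ j, 0 < g j) →
          ∃ (t : Finset ι) (mu : ι → ℝ),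
            LinearIndependent ℝ (fun j : {x // x ∈ t} => v j) ∧ (∀ j, 0 ≤ mu j) ∧
            (∀ j ∉ t, mu j = 0) ∧ ∑ j, mu j • v j = ∑ j, lam j • v j := by
        rintro g hg ⟨jp, hjp⟩
        set c : ι → ℝ := fun j => if h : j ∈ s then g ⟨j, h⟩ else 0 with hc
        have hcs : ∀ j (h : j ∈ s), c j = g ⟨j, h⟩ := fun j h => by simp [hc, h]
        have hcn : ∀ j, j ∉ s → c j = 0 := fun j h => by simp [hc, h]
        have hcsum : ∑ j, c j • v j = 0 := by
          rw [← hg]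
          rw [show (∑ j, c j • v j) = ∑ j ∈ s, c j • v j from
            (Finset.sum_subset (Finset.subset_univ s) (fun j _ hj => by
              rw [hcn j hj, zero_smul])).symm]
          rw [← Finset.sum_attach s (fun j => c j • v j)]
          exact Finset.sum_congr rfl (fun j _ => by rw [hcs j j.2])
        -- pick minimizer of lam j / c j over positive c j
        have hTne : (s.filter (fun j => 0 < c j)).Nonempty :=
          ⟨jp, Finset.mem_filter.mpr ⟨jp.2, by rw [hcs jp jp.2]; exact hjp⟩⟩
        obtain ⟨j0, hj0T, hj0min⟩ :=
          Finset.exists_min_image (s.filter (fun j => 0 < c j)) (fun j => lam j / c j) hTne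
        have hj0s : j0 ∈ s := (Finset.mem_filter.mp hj0T).1
        have hcj0 : 0 < c j0 := (Finset.mem_filter.mp hj0T).2
        set t : ℝ := lam j0 / c j0 with ht
        have ht0 : 0 ≤ t := div_nonneg (hlam j0) hcj0.le
        set mu : ι → ℝ := fun j => lam j - t * c j with hmu
        have hmu0 : ∀ j, 0 ≤ mu j := by
          intro j
          rcases le_or_gt (c j) 0 with h | h
          · have : t * c j ≤ 0 := mul_nonpos_of_nonneg_of_nonpos ht0 h
            simp only [hmu]; linarith [hlam j]
          · have hjs : j ∈ s := by
              by_contra hns; rw [hcn j hns] at h; exact lt_irrefl 0 h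
            have h1 := hj0min j (Finset.mem_filter.mpr ⟨hjs, h⟩)
            have h2 : t * c j ≤ lam j := by
              rw [ht, div_mul_eq_mul_div, div_le_iff₀ hcj0]
              rw [div_le_div_iff₀ hcj0 h] at h1; linarith
            simp only [hmu]; linarith
        have hmuj0 : mu j0 = 0 := by
          simp only [hmu, ht]; field_simp; ring
        have hmusupp : ∀ j ∉ s.erase j0, mu j = 0 := by
          intro j hj
          by_cases hjs : j ∈ s
          · have : j = j0 := by
              by_contra hne
              exact hj (Finset.mem_erase.mpr ⟨hne, hjs⟩)
            rw [this]; exact hmuj0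
          · simp only [hmu, hcn j hjs, hsupp j hjs]; ring
        have hsum : ∑ j, mu j • v j = ∑ j, lam j • v j := by
          have : ∑ j, mu j • v j = ∑ j, lam j • v j - t • ∑ j, c j • v j := by
            rw [Finset.smul_sum, ← Finset.sum_sub_distrib]
            exact Finset.sum_congr rfl (fun j _ => by
              simp only [hmu, sub_smul, mul_smul])
          rw [this, hcsum, smul_zero, sub_zero]
        obtain ⟨t', mu', h1, h2, h3, h4⟩ :=
          ih (s.erase j0) (Finset.erase_ssubset hj0s) mu hmu0 hmusupp
        exact ⟨t', mu', h1, h2, h3, h4.trans hsum⟩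
      rcases lt_or_gt_of_ne hjne with hneg | hpos
      · refine key (-g) ?_ ⟨jne, by simpa using hneg⟩
        rw [← neg_zero, ← hg0, ← Finset.sum_neg_distrib]
        exact Finset.sum_congr rfl (fun j _ => by rw [Pi.neg_apply, neg_smul])
      · exact key g hg0 ⟨jne, hpos⟩

variable {E : Type*} [NormedAddCommGroup E] [InnerProductSpace ℝ E] [FiniteDimensional ℝ E]

set_option linter.unusedSectionVars false

lemma cone_closed' {ι : Type*} [Fintype ι] (v : ι → E) :
    IsClosed {x : E | ∃ l : ι → ℝ, (∀ j, 0 ≤ l j) ∧ ∑ j, l j • v j = x} := by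
  classical
  have ext_sum : ∀ (s : Finset ι) (l : {x // x ∈ s} → ℝ),
      ∑ j : ι, (if h : j ∈ s then l ⟨j, h⟩ else 0) • v j = ∑ j : {x // x ∈ s}, l j • v j := by
    intro s l
    rw [← Finset.sum_subset (Finset.subset_univ s) (fun j _ hj => by simp [hj])]
    rw [← Finset.sum_attach s (fun j => (if h : j ∈ s then l ⟨j, h⟩ else 0) • v j)]
    exact Finset.sum_congr rfl fun j _ => by simp [j.2]
  have hrw : {x : E | ∃ l : ι → ℝ, (∀ j, 0 ≤ l j) ∧ ∑ j, l j • v j = x} =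
      ⋃ s ∈ {s : Finset ι | LinearIndependent ℝ (fun j : {x // x ∈ s} => v j)},
        (fun l : {x // x ∈ s} → ℝ => ∑ j, l j • v (j : ι)) '' {l | ∀ j, 0 ≤ l j} := by
    ext x
    simp only [Set.mem_setOf_eq, Set.mem_iUnion, Set.mem_image, exists_prop]
    constructor
    · rintro ⟨l, hl0, hl⟩
      obtain ⟨s, mu, h1, h2, h3, h4⟩ := cone_caratheodory' v l hl0
      refine ⟨s, h1, fun j => mu j, fun j => h2 j, ?_⟩
      rw [← ext_sum s (fun j => mu j)]
      rw [← hl, ← h4]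
      exact Finset.sum_congr rfl fun j _ => by
        by_cases h : j ∈ s <;> simp [h, h3 j]
    · rintro ⟨s, hs, l, hl0, hl⟩
      refine ⟨fun j => if h : j ∈ s then l ⟨j, h⟩ else 0, fun j => ?_, ?_⟩
      · by_cases h : j ∈ s
        · simpa [h] using hl0 ⟨j, h⟩
        · simp [h]
      · rw [ext_sum s l]; exact hl
  rw [hrw]
  apply Set.Finite.isClosed_biUnion (Set.toFinite _)
  intro s hs
  set L : ({x // x ∈ s} → ℝ) →ₗ[ℝ] E :=
    { toFun := fun l => ∑ j, l j • v (j : ι),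
      map_add' := fun a b => by simp [add_smul, Finset.sum_add_distrib],
      map_smul' := fun c a => by simp [Finset.smul_sum, smul_smul] } with hL
  have hker : LinearMap.ker L = ⊥ := by
    rw [LinearMap.ker_eq_bot']
    intro g hg
    have := Fintype.linearIndependent_iff.mp hs g hg
    exact funext this
  have hemb := LinearMap.isClosedEmbedding_of_injective (f := L) hker
  have hcl : IsClosed {l : {x // x ∈ s} → ℝ | ∀ j, 0 ≤ l j} := by
    have : {l : {x // x ∈ s} → ℝ | ∀ j, 0 ≤ l j} = ⋂ j, {l | 0 ≤ l j} := by
      ext; simp [Set.mem_iInter]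
    rw [this]
    exact isClosed_iInter fun j => isClosed_le continuous_const (continuous_apply j)
  have := hemb.isClosedMap _ hcl
  convert this using 2
  rfl

lemma farkas_cone' {ι : Type*} [Fintype ι] (v : ι → E) (c : E)
    (h : ∀ x : E, (∀ j, 0 ≤ ⟪v j, x⟫) → 0 ≤ ⟪c, x⟫) :
    ∃ l : ι → ℝ, (∀ j, 0 ≤ l j) ∧ ∑ j, l j • v j = c := by
  classical
  by_contra hc
  set K : ConvexCone ℝ E :=
    { carrier := {x : E | ∃ l : ι → ℝ, (∀ j, 0 ≤ l j) ∧ ∑ j, l j • v j = x}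
      smul_mem' := by
        rintro t ht x ⟨l, hl0, hl⟩
        exact ⟨t • l, fun j => mul_nonneg ht.le (hl0 j), by
          rw [← hl, Finset.smul_sum]
          exact Finset.sum_congr rfl fun j _ => (smul_smul t (l j) (v j)).symm⟩
      add_mem' := by
        rintro x ⟨l, hl0, hl⟩ y ⟨m, hm0, hm⟩
        exact ⟨l + m, fun j => add_nonneg (hl0 j) (hm0 j), by
          simp only [Pi.add_apply, add_smul, Finset.sum_add_distrib, hl, hm]⟩ } with hK
  have hne : (K : Set E).Nonempty :=
    ⟨0, ⟨fun _ => 0, fun j => le_refl 0, by simp⟩⟩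
  have hcl : IsClosed (K : Set E) := cone_closed' v
  let P : ProperCone ℝ E :=
    { carrier := (K : Set E)
      add_mem' := fun ha hb => K.add_mem ha hb
      zero_mem' := ⟨fun _ => 0, fun j => le_refl 0, by simp⟩
      smul_mem' := by
        rintro c x ⟨l, hl0, hl⟩
        exact ⟨(c : ℝ) • l, fun j => mul_nonneg c.2 (hl0 j), by
          rw [← hl, Finset.smul_sum]
          exact Finset.sum_congr rfl fun j _ => by rw [Pi.smul_apply, smul_eq_mul, mul_smul]; rfl⟩
      isClosed' := hcl }
  have hcK : c ∉ P := hc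
  obtain ⟨y, hy1, hy2⟩ :=
    ProperCone.hyperplane_separation' P hcK
  rw [real_inner_comm] at hy2
  have hvy : ∀ j, 0 ≤ ⟪v j, y⟫ := by
    intro j
    refine hy1 (v j) ⟨fun k => if k = j then 1 else 0, fun k => by positivity, ?_⟩
    simp [ite_smul]
  have := h y hvy
  rw [real_inner_comm] at this
  linarith

end FarkasTools

noncomputable def snocE {n : ℕ} (u : Fin n → ℝ) (r : ℝ) : EuclideanSpace ℝ (Fin (n+1)) :=
  (WithLp.equiv 2 (Fin (n+1) → ℝ)).symm (Fin.snoc u r)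

lemma inner_snocE {n : ℕ} (u u' : Fin n → ℝ) (r r' : ℝ) :
    ⟪snocE u r, snocE u' r'⟫ = (∑ k, u k * u' k) + r * r' := by
  simp [snocE, PiLp.inner_apply, RCLike.inner_apply, Fin.sum_univ_castSucc, mul_comm]

lemma snocE_eta {m : ℕ} (z : EuclideanSpace ℝ (Fin (m+1))) :
    z = snocE (fun k => z (Fin.castSucc k)) (z (Fin.last m)) := by
  ext i
  simp only [snocE, WithLp.equiv_symm_apply, PiLp.toLp_apply]
  induction i using Fin.lastCases with
  | last => simp
  | cast k => simp

lemma inner_snocE_single {n : ℕ} (u : Fin n → ℝ) (r : ℝ) (k : Fin n) :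
    ⟪snocE u r, snocE (Pi.single k 1) 0⟫ = u k := by
  classical
  rw [inner_snocE]
  simp [Pi.single_apply, mul_ite, Finset.sum_ite_eq']

lemma inner_snocE_last {n : ℕ} (u : Fin n → ℝ) (r : ℝ) :
    ⟪snocE u r, snocE 0 1⟫ = r := by
  rw [inner_snocE]; simp

theorem hpoly_in_hpoly_necessary
    (n qx qy : ℕ)
    (Hx : Matrix (Fin qx) (Fin n) ℝ) (hx : Fin qx → ℝ)
    (Hy : Matrix (Fin qy) (Fin n) ℝ) (hy : Fin qy → ℝ)
    (hne : {x : Fin n → ℝ | Hx.mulVec x ≤ hx}.Nonempty)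
    (hbX : Bornology.IsBounded {x : Fin n → ℝ | Hx.mulVec x ≤ hx})
    (hbY : Bornology.IsBounded {y : Fin n → ℝ | Hy.mulVec y ≤ hy})
    (hsub : {x : Fin n → ℝ | Hx.mulVec x ≤ hx} ⊆ {y : Fin n → ℝ | Hy.mulVec y ≤ hy}) :
    ∃ Λ : Matrix (Fin qy) (Fin qx) ℝ,
      (∀ i j, 0 ≤ Λ i j) ∧ Λ * Hx = Hy ∧ Λ.mulVec hx ≤ hy := by
  classical
  have key : ∀ i : Fin qy, ∃ lam : Fin qx → ℝ, (∀ j, 0 ≤ lam j) ∧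
      (∀ k, ∑ j, lam j * Hx j k = Hy i k) ∧ (∑ j, lam j * hx j ≤ hy i) := by
    intro i
    set w : Fin qx ⊕ Unit → EuclideanSpace ℝ (Fin (n+1)) :=
      Sum.elim (fun j => snocE (Hx j) (hx j)) (fun _ => snocE 0 1) with hw
    have hsep : ∀ z : EuclideanSpace ℝ (Fin (n+1)),
        (∀ j, 0 ≤ ⟪w j, z⟫) → 0 ≤ ⟪snocE (Hy i) (hy i), z⟫ := by
      intro z hz
      set x : Fin n → ℝ := fun k => z (Fin.castSucc k) with hxdef
      set μ : ℝ := z (Fin.last n) with hμdef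
      have hzeq : z = snocE x μ := snocE_eta z
      rw [hzeq, inner_snocE]
      have hμ : 0 ≤ μ := by
        have h := hz (Sum.inr ())
        rw [hzeq] at h
        simp only [hw, Sum.elim_inr] at h
        rw [inner_snocE] at h
        simpa using h
      have hj : ∀ j, 0 ≤ (∑ k, Hx j k * x k) + hx j * μ := by
        intro j
        have h := hz (Sum.inl j)
        rw [hzeq] at h
        simp only [hw, Sum.elim_inl] at h
        rw [inner_snocE] at h
        exact h
      rcases hμ.lt_or_eq with hpos | hzero
      · -- μ > 0 : scale down
        set p : Fin n → ℝ := fun k => -(x k) / μ with hp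
        have hpX : p ∈ {x : Fin n → ℝ | Hx.mulVec x ≤ hx} := by
          intro j
          have : Hx.mulVec p j = (-(∑ k, Hx j k * x k)) / μ := by
            simp only [Matrix.mulVec, dotProduct, hp]
            rw [Finset.sum_congr rfl (fun k _ =>
              show Hx j k * (-x k / μ) = -(Hx j k * x k) / μ by ring),
              ← Finset.sum_div, Finset.sum_neg_distrib]
          rw [this, div_le_iff₀ hpos]
          have := hj j
          nlinarith
        have hpY := hsub hpX i
        have : Hy.mulVec p i = (-(∑ k, Hy i k * x k)) / μ := by
          simp only [Matrix.mulVec, dotProduct, hp]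
          rw [Finset.sum_congr rfl (fun k _ =>
            show Hy i k * (-x k / μ) = -(Hy i k * x k) / μ by ring),
            ← Finset.sum_div, Finset.sum_neg_distrib]
        rw [this, div_le_iff₀ hpos] at hpY
        nlinarith
      · -- μ = 0 : recession direction must be 0
        have hj0 : ∀ j, 0 ≤ ∑ k, Hx j k * x k := by
          intro j; have := hj j; rw [← hzero] at this; simpa using this
        have hx0 : x = 0 := by
          by_contra hxne
          obtain ⟨x0, hx0X⟩ := hne
          have hmem : ∀ t : ℝ, 0 ≤ t → (x0 - t • x) ∈ {x : Fin n → ℝ | Hx.mulVec x ≤ hx} := by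
            intro t ht j
            have : Hx.mulVec (x0 - t • x) j = Hx.mulVec x0 j - t * (∑ k, Hx j k * x k) := by
              rw [Matrix.mulVec_sub, Matrix.mulVec_smul]
              simp [Matrix.mulVec, dotProduct]
            rw [this]
            have h1 := hx0X j
            have h2 : 0 ≤ t * (∑ k, Hx j k * x k) := mul_nonneg ht (hj0 j)
            exact le_trans (by linarith) h1
          obtain ⟨C, hC⟩ := isBounded_iff_forall_norm_le.mp hbX
          have hxn : 0 < ‖x‖ := norm_pos_iff.mpr hxne
          set t : ℝ := (C + ‖x0‖ + 1) / ‖x‖ with htdef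
          have ht0 : 0 ≤ t := by
            have hC0 : 0 ≤ C := le_trans (norm_nonneg x0) (hC x0 hx0X)
            positivity
          have hb := hC _ (hmem t ht0)
          have hts : t * ‖x‖ ≤ C + ‖x0‖ := by
            have h1 : x0 - (x0 - t • x) = t • x := by abel
            have h2 := norm_sub_le x0 (x0 - t • x)
            rw [h1] at h2
            rw [norm_smul, Real.norm_of_nonneg ht0] at h2
            linarith
          rw [htdef, div_mul_cancel₀ _ (ne_of_gt hxn)] at hts
          linarith
        rw [← hzero, hx0]
        simp
    obtain ⟨l, hl0, hlsum⟩ := farkas_cone' w (snocE (Hy i) (hy i)) hsep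
    refine ⟨fun j => l (Sum.inl j), fun j => hl0 _, ?_, ?_⟩
    · intro k
      have h := congrArg (fun v => ⟪v, snocE (Pi.single k 1) 0⟫) hlsum
      simp only [Fintype.sum_sum_type, inner_add_left, sum_inner, real_inner_smul_left, hw,
        Sum.elim_inl, Sum.elim_inr, inner_snocE_single, Pi.zero_apply, mul_zero,
        Finset.univ_unique, Finset.sum_const, Finset.sum_singleton, smul_eq_mul,
        add_zero] at h
      exact h
    · have h := congrArg (fun v => ⟪v, snocE 0 1⟫) hlsum
      simp only [Fintype.sum_sum_type, inner_add_left, sum_inner, real_inner_smul_left, hw,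
        Sum.elim_inl, Sum.elim_inr, inner_snocE_last, mul_one,
        Finset.univ_unique, Finset.sum_const, Finset.sum_singleton, smul_eq_mul] at h
      have hnn : 0 ≤ l (Sum.inr default) := hl0 _
      linarith [h]
  choose lam h0 h1 h2 using key
  refine ⟨Matrix.of (fun i j => lam i j), fun i j => h0 i j, ?_, ?_⟩
  · ext i k
    rw [Matrix.mul_apply]
    exact h1 i k
  · intro i
    have : (Matrix.of (fun i j => lam i j)).mulVec hx i = ∑ j, lam i j * hx j := by
      simp [Matrix.mulVec, dotProduct]
    rw [this]
    exact h2 i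
end

section
/- Let 𝕏 = x̄ + X·Pₓ and 𝕐 = ȳ + Y·P_y be affine transformations of H-polytopes Pₓ = {x ∈ ℝ^{nₓ} : Hₓx ≤ hₓ} and P_y = {y ∈ ℝ^{n_y} : H_y y ≤ h_y}, with Pₓ nonempty. If there exist matrices Γ ∈ ℝ^{n_y × nₓ}, β ∈ ℝ^{n_y}, and a nonnegative Λ ∈ ℝ₊^{q_y × q_x} such that X = YΓ, ȳ − x̄ = Yβ, Λ Hₓ = H_y Γ, and Λ hₓ ≤ h_y + H_y β, then 𝕏 ⊆ 𝕐. -/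
open Matrix

theorem ahpoly_in_ahpoly_sufficient
    (n nx ny qx qy : ℕ)
    (xbar ybar : Fin n → ℝ)
    (X : Matrix (Fin n) (Fin nx) ℝ) (Y : Matrix (Fin n) (Fin ny) ℝ)
    (Hx : Matrix (Fin qx) (Fin nx) ℝ) (hx : Fin qx → ℝ)
    (Hy : Matrix (Fin qy) (Fin ny) ℝ) (hy : Fin qy → ℝ)
    (hne : {p : Fin nx → ℝ | Hx.mulVec p ≤ hx}.Nonempty)
    (Γ : Matrix (Fin ny) (Fin nx) ℝ) (β : Fin ny → ℝ)
    (Λ : Matrix (Fin qy) (Fin qx) ℝ)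
    (hΛ : ∀ i j, 0 ≤ Λ i j)
    (hX : X = Y * Γ)
    (hβ : ybar - xbar = Y.mulVec β)
    (hH : Λ * Hx = Hy * Γ)
    (hh : Λ.mulVec hx ≤ hy + Hy.mulVec β) :
    (fun p => xbar + X.mulVec p) '' {p : Fin nx → ℝ | Hx.mulVec p ≤ hx}
      ⊆ (fun q => ybar + Y.mulVec q) '' {q : Fin ny → ℝ | Hy.mulVec q ≤ hy} := by
  rintro z ⟨p, hp, rfl⟩
  refine ⟨Γ.mulVec p - β, ?_, ?_⟩
  · have key : Λ.mulVec (Hx.mulVec p) ≤ Λ.mulVec hx := by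
      intro i
      simp only [mulVec, dotProduct]
      exact Finset.sum_le_sum fun j _ =>
        mul_le_mul_of_nonneg_left (hp j) (hΛ i j)
    intro i
    have h1 : Hy.mulVec (Γ.mulVec p - β) i
        = Λ.mulVec (Hx.mulVec p) i - Hy.mulVec β i := by
      rw [mulVec_sub, mulVec_mulVec, ← hH, ← mulVec_mulVec]
      simp [Pi.sub_apply]
    rw [h1]
    have := key i
    have := hh i
    simp only [Pi.add_apply] at *
    linarith
  · simp only [mulVec_sub, mulVec_mulVec, ← hX, ← hβ]
    funext i
    simp [Pi.sub_apply]
    ring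
end

section
/- Let 𝕏 = x̄ + X·Pₓ and 𝕐 = ȳ + Y·P_y where Pₓ contains an open ball (is full-dimensional) and 𝕏 ⊆ 𝕐. Then every column of X lies in the column space of Y, and ȳ − x̄ lies in the column space of Y; i.e., there exist Γ with X = YΓ and β with ȳ − x̄ = Yβ. -/
open Matrix

theorem ahpoly_containment_range_condition
    (n nx ny qx qy : ℕ)
    (xbar ybar : Fin n → ℝ)
    (X : Matrix (Fin n) (Fin nx) ℝ) (Y : Matrix (Fin n) (Fin ny) ℝ)
    (Hx : Matrix (Fin qx) (Fin nx) ℝ) (hx : Fin qx → ℝ)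
    (Hy : Matrix (Fin qy) (Fin ny) ℝ) (hy : Fin qy → ℝ)
    (hfull : ∃ (c : Fin nx → ℝ) (ε : ℝ), 0 < ε ∧
      Metric.ball c ε ⊆ {p : Fin nx → ℝ | Hx.mulVec p ≤ hx})
    (hsub : (fun p => xbar + X.mulVec p) '' {p : Fin nx → ℝ | Hx.mulVec p ≤ hx}
      ⊆ (fun q => ybar + Y.mulVec q) '' {q : Fin ny → ℝ | Hy.mulVec q ≤ hy}) :
    (∃ Γ : Matrix (Fin ny) (Fin nx) ℝ, X = Y * Γ) ∧
    (∃ β : Fin ny → ℝ, ybar - xbar = Y.mulVec β) := by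
  obtain ⟨c, ε, hε, hball⟩ := hfull
  set S := LinearMap.range Y.mulVecLin with hS
  -- every admissible p gives membership
  have hmem : ∀ p ∈ Metric.ball c ε, X.mulVec p + xbar - ybar ∈ S := by
    intro p hp
    obtain ⟨q, hq, heq⟩ := hsub ⟨p, hball hp, rfl⟩
    refine ⟨q, ?_⟩
    simp only [Matrix.mulVecLin_apply]
    have h : ybar + Y.mulVec q = xbar + X.mulVec p := heq
    funext k
    have hk := congrFun h k
    simp only [Pi.add_apply, Pi.sub_apply] at hk ⊢
    linarith
  have hc : c ∈ Metric.ball c ε := Metric.mem_ball_self hε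
  -- columns of X are in S
  have hcol : ∀ i, X.mulVec (Pi.single i 1) ∈ S := by
    intro i
    have hp2 : c + (ε / 2) • (Pi.single i 1 : Fin nx → ℝ) ∈ Metric.ball c ε := by
      rw [Metric.mem_ball, dist_eq_norm, add_sub_cancel_left, norm_smul]
      have h1 : ‖(Pi.single i 1 : Fin nx → ℝ)‖ ≤ 1 := by
        rw [pi_norm_le_iff_of_nonneg zero_le_one]
        intro j
        rcases eq_or_ne j i with rfl | hji
        · simp
        · simp [Pi.single_eq_of_ne hji]
      calc ‖ε / 2‖ * ‖(Pi.single i 1 : Fin nx → ℝ)‖ ≤ ‖ε / 2‖ * 1 := by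
            exact mul_le_mul_of_nonneg_left h1 (norm_nonneg _)
        _ = |ε / 2| := by rw [mul_one]; rfl
        _ < ε := by rw [abs_of_pos (by linarith)]; linarith
    have h2 := hmem _ hp2
    have h1 := hmem _ hc
    have hdiff : (ε / 2) • X.mulVec (Pi.single i 1) ∈ S := by
      have := S.sub_mem h2 h1
      simpa [Matrix.mulVec_add, Matrix.mulVec_smul, add_sub_add_right_eq_sub,
        sub_sub_sub_cancel_right] using this
    have := S.smul_mem (2 / ε) hdiff
    rwa [smul_smul, div_mul_div_comm, mul_comm, div_self (by positivity), one_smul] at this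
  -- any X.mulVec v is in S
  have hXv : ∀ v : Fin nx → ℝ, X.mulVec v ∈ S := by
    intro v
    have hv : X.mulVec v = ∑ i, v i • X.mulVec (Pi.single i 1) := by
      have : v = ∑ i, v i • (Pi.single i 1 : Fin nx → ℝ) := by
        ext j; simp [Finset.sum_apply, Pi.single_apply]
      calc X.mulVec v = X.mulVecLin (∑ i, v i • (Pi.single i 1 : Fin nx → ℝ)) := by
            rw [← this]; rfl
        _ = ∑ i, v i • X.mulVec (Pi.single i 1) := by
            rw [map_sum]; simp
    rw [hv]
    exact Submodule.sum_mem S fun i _ => S.smul_mem _ (hcol i)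
  constructor
  · -- build Γ from the columns
    choose g hg using fun i => (hcol i)
    refine ⟨Matrix.of fun j i => g i j, ?_⟩
    ext k i
    have := hg i
    rw [Matrix.mulVecLin_apply] at this
    have hcolk : X k i = Y.mulVec (g i) k := by
      have h := congrFun this k
      simpa [Matrix.mulVec_single] using h.symm
    rw [hcolk]
    simp [Matrix.mul_apply, Matrix.mulVec, dotProduct, Matrix.of_apply]
  · have h1 := hmem _ hc
    have h2 := hXv c
    have := S.sub_mem h2 h1
    obtain ⟨β, hβ⟩ := this
    refine ⟨β, ?_⟩
    rw [Matrix.mulVecLin_apply] at hβ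
    rw [hβ]; abel
end

section
/- Let Z_x = x̄ + X·B_{nₓ} and Z_y = ȳ + Y·B_{n_y} be zonotopes, where B_m = {z ∈ ℝ^m : ‖z‖_∞ ≤ 1}. If there exist Γ ∈ ℝ^{n_y × nₓ} and β ∈ ℝ^{n_y} with X = YΓ, ȳ − x̄ = Yβ, and ‖(Γ, β)‖_∞ ≤ 1 (i.e., for every row i, Σⱼ|Γᵢⱼ| + |βᵢ| ≤ 1), then Z_x ⊆ Z_y. -/
open Matrix Finset

theorem zonotope_in_zonotope_sufficient
    (n nx ny : ℕ)
    (xbar ybar : Fin n → ℝ)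
    (X : Matrix (Fin n) (Fin nx) ℝ) (Y : Matrix (Fin n) (Fin ny) ℝ)
    (Γ : Matrix (Fin ny) (Fin nx) ℝ) (β : Fin ny → ℝ)
    (hX : X = Y * Γ)
    (hβ : ybar - xbar = Y.mulVec β)
    (hnorm : ∀ i : Fin ny, (∑ j : Fin nx, |Γ i j|) + |β i| ≤ 1) :
    (fun z => xbar + X.mulVec z) '' {z : Fin nx → ℝ | ∀ j, |z j| ≤ 1}
      ⊆ (fun z => ybar + Y.mulVec z) '' {z : Fin ny → ℝ | ∀ j, |z j| ≤ 1} := by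
  rintro p ⟨z, hz, rfl⟩
  refine ⟨Γ.mulVec z - β, ?_, ?_⟩
  · intro i
    have h1 : |Γ.mulVec z i| ≤ ∑ j : Fin nx, |Γ i j| := by
      have hrw : Γ.mulVec z i = ∑ j : Fin nx, Γ i j * z j := rfl
      rw [hrw]
      calc |∑ j : Fin nx, Γ i j * z j| ≤ ∑ j : Fin nx, |Γ i j * z j| :=
            Finset.abs_sum_le_sum_abs _ _
        _ ≤ ∑ j : Fin nx, |Γ i j| := by
            apply Finset.sum_le_sum
            intro j _
            rw [abs_mul]
            calc |Γ i j| * |z j| ≤ |Γ i j| * 1 :=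
                  mul_le_mul_of_nonneg_left (hz j) (abs_nonneg _)
              _ = |Γ i j| := mul_one _
    calc |(Γ.mulVec z - β) i| = |Γ.mulVec z i - β i| := rfl
      _ ≤ |Γ.mulVec z i| + |β i| := abs_sub _ _
      _ ≤ (∑ j : Fin nx, |Γ i j|) + |β i| := by linarith
      _ ≤ 1 := hnorm i
  · simp only [hX, Matrix.mulVec_sub, ← Matrix.mulVec_mulVec, ← hβ]
    abel
end

section
/- For the unit box B_n = {x ∈ ℝⁿ : ‖x‖_∞ ≤ 1}, there exists a nonnegative matrix Λ ∈ ℝ₊^{2n_y × 2nₓ} satisfying Λ [I; −I] = [I; −I] Γ and Λ 𝟙 ≤ 𝟙 + [I; −I] β if and only if for every row i, Σⱼ |Γᵢⱼ| + |βᵢ| ≤ 1. -/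
open Matrix Finset

theorem box_containment_lambda_iff
    (nx ny : ℕ)
    (Γ : Matrix (Fin ny) (Fin nx) ℝ) (β : Fin ny → ℝ) :
    (∃ Λ : Matrix (Fin ny ⊕ Fin ny) (Fin nx ⊕ Fin nx) ℝ,
        (∀ i j, 0 ≤ Λ i j) ∧
        Λ * (Matrix.fromRows (1 : Matrix (Fin nx) (Fin nx) ℝ)
              (-(1 : Matrix (Fin nx) (Fin nx) ℝ)))
          = (Matrix.fromRows (1 : Matrix (Fin ny) (Fin ny) ℝ)
              (-(1 : Matrix (Fin ny) (Fin ny) ℝ))) * Γ ∧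
        Λ.mulVec (fun _ => (1 : ℝ))
          ≤ (fun _ => (1 : ℝ)) +
            (Matrix.fromRows (1 : Matrix (Fin ny) (Fin ny) ℝ)
              (-(1 : Matrix (Fin ny) (Fin ny) ℝ))).mulVec β)
    ↔ ∀ i : Fin ny, (∑ j : Fin nx, |Γ i j|) + |β i| ≤ 1 := by
  constructor
  · rintro ⟨Λ, hpos, heq, hle⟩ i
    have h1 : ∀ j, Λ (Sum.inl i) (Sum.inl j) - Λ (Sum.inl i) (Sum.inr j) = Γ i j := by
      intro j
      have := congrFun (congrFun heq (Sum.inl i)) j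
      simpa [Matrix.mul_apply, Fintype.sum_sum_type, Matrix.one_apply, Matrix.neg_apply,
        mul_ite, ite_mul, mul_one, mul_zero, one_mul, zero_mul,
        Finset.sum_ite_eq, Finset.sum_ite_eq', sub_eq_add_neg, Finset.sum_sub_distrib] using this
    have h2 : ∀ j, Λ (Sum.inr i) (Sum.inl j) - Λ (Sum.inr i) (Sum.inr j) = -Γ i j := by
      intro j
      have := congrFun (congrFun heq (Sum.inr i)) j
      simpa [Matrix.mul_apply, Fintype.sum_sum_type, Matrix.one_apply, Matrix.neg_apply,
        mul_ite, ite_mul, mul_one, mul_zero, one_mul, zero_mul,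
        Finset.sum_ite_eq, Finset.sum_ite_eq', sub_eq_add_neg, Finset.sum_sub_distrib] using this
    have hs1 : (∑ j, Λ (Sum.inl i) (Sum.inl j)) + (∑ j, Λ (Sum.inl i) (Sum.inr j)) ≤ 1 + β i := by
      have := hle (Sum.inl i)
      simpa [Matrix.mulVec, dotProduct, Fintype.sum_sum_type, Matrix.one_apply,
        ite_mul, one_mul, zero_mul, Finset.sum_ite_eq, Finset.sum_ite_eq'] using this
    have hs2 : (∑ j, Λ (Sum.inr i) (Sum.inl j)) + (∑ j, Λ (Sum.inr i) (Sum.inr j)) ≤ 1 - β i := by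
      have := hle (Sum.inr i)
      simpa [Matrix.mulVec, dotProduct, Fintype.sum_sum_type, Matrix.one_apply,
        Matrix.neg_apply, ite_mul, one_mul, zero_mul, Finset.sum_ite_eq, Finset.sum_ite_eq',
        sub_eq_add_neg] using this
    have key1 : (∑ j, |Γ i j|) ≤ 1 + β i := by
      calc (∑ j, |Γ i j|) ≤ ∑ j, (Λ (Sum.inl i) (Sum.inl j) + Λ (Sum.inl i) (Sum.inr j)) := by
            apply Finset.sum_le_sum
            intro j _
            rw [← h1 j]
            have := abs_sub (Λ (Sum.inl i) (Sum.inl j)) (Λ (Sum.inl i) (Sum.inr j))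
            calc |Λ (Sum.inl i) (Sum.inl j) - Λ (Sum.inl i) (Sum.inr j)|
                ≤ |Λ (Sum.inl i) (Sum.inl j)| + |Λ (Sum.inl i) (Sum.inr j)| := abs_sub _ _
              _ = Λ (Sum.inl i) (Sum.inl j) + Λ (Sum.inl i) (Sum.inr j) := by
                  rw [abs_of_nonneg (hpos _ _), abs_of_nonneg (hpos _ _)]
        _ ≤ 1 + β i := by rw [Finset.sum_add_distrib]; exact hs1
    have key2 : (∑ j, |Γ i j|) ≤ 1 - β i := by
      calc (∑ j, |Γ i j|) ≤ ∑ j, (Λ (Sum.inr i) (Sum.inl j) + Λ (Sum.inr i) (Sum.inr j)) := by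
            apply Finset.sum_le_sum
            intro j _
            rw [show |Γ i j| = |(-Γ i j : ℝ)| from (abs_neg _).symm, ← h2 j]
            calc |Λ (Sum.inr i) (Sum.inl j) - Λ (Sum.inr i) (Sum.inr j)|
                ≤ |Λ (Sum.inr i) (Sum.inl j)| + |Λ (Sum.inr i) (Sum.inr j)| := abs_sub _ _
              _ = Λ (Sum.inr i) (Sum.inl j) + Λ (Sum.inr i) (Sum.inr j) := by
                  rw [abs_of_nonneg (hpos _ _), abs_of_nonneg (hpos _ _)]
        _ ≤ 1 - β i := by rw [Finset.sum_add_distrib]; exact hs2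
    have hfin : |β i| ≤ 1 - ∑ j, |Γ i j| := abs_le.mpr ⟨by linarith, by linarith⟩
    linarith
  · intro h
    refine ⟨fun p q =>
      match p, q with
      | Sum.inl i, Sum.inl j => max (Γ i j) 0
      | Sum.inl i, Sum.inr j => max (-Γ i j) 0
      | Sum.inr i, Sum.inl j => max (-Γ i j) 0
      | Sum.inr i, Sum.inr j => max (Γ i j) 0, ?_, ?_, ?_⟩
    · rintro (i | i) (j | j) <;> exact le_max_right _ _
    · ext p j
      rcases p with i | i <;>
      · erw [Matrix.mul_apply]
        simp [Matrix.mul_apply, Fintype.sum_sum_type, Matrix.one_apply, Matrix.neg_apply,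
          mul_ite, ite_mul, mul_one, mul_zero, one_mul, zero_mul,
          Finset.sum_ite_eq, Finset.sum_ite_eq', sub_eq_add_neg, ← Finset.sum_add_distrib]
        <;> linarith [max_zero_sub_max_neg_zero_eq_self (Γ i j)]
    · intro p
      rcases p with i | i <;>
      · have hi := h i
        have habs : ∀ j, max (Γ i j) 0 + max (-Γ i j) 0 = |Γ i j| := fun j =>
          max_zero_add_max_neg_zero_eq_abs_self _
        have hβ := abs_nonneg (β i)
        have hβ1 := neg_abs_le (β i)
        have hβ2 := le_abs_self (β i)
        simp [Matrix.mulVec, dotProduct, Fintype.sum_sum_type, Matrix.one_apply,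
          Matrix.neg_apply, ite_mul, one_mul, zero_mul, mul_one,
          Finset.sum_ite_eq, Finset.sum_ite_eq', ← Finset.sum_add_distrib, habs,
          add_comm] <;>
        · have hsum : ∑ j, (Γ i j ⊔ 0 + -Γ i j ⊔ 0) = ∑ j, |Γ i j| :=
            Finset.sum_congr rfl (fun j _ => habs j)
          linarith
end

section
/- Let P_x ⊆ ℝ^{nₓ} be a nonempty polytope, x̄ ∈ ℝⁿ, X ∈ ℝ^{n×nₓ}, and let Y ∈ ℝ^{n×n_y}, ȳᵢ ∈ ℝⁿ, polytopes P_{y,i} for i = 1,…,N. If there exist λᵢ ≥ 0 with Σλᵢ = 1 and sets X̄ᵢ = x̄ᵢ + Xᵢ·P_x satisfying x̄ᵢ + Xᵢ·P_x ⊆ λᵢ(ȳᵢ + Yᵢ·P_{y,i}) for each i, with Σᵢ x̄ᵢ = x̄ and Σᵢ Xᵢ = X, then x̄ + X·P_x ⊆ conv(∪ᵢ (ȳᵢ + Yᵢ·P_{y,i})). -/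
open Matrix Pointwise Finset

theorem ahpoly_in_convexhull_of_ahpolytopes
    (n nx N : ℕ) (ny : Fin N → ℕ) (qx : ℕ) (qy : Fin N → ℕ)
    (xbar : Fin n → ℝ) (X : Matrix (Fin n) (Fin nx) ℝ)
    (Hx : Matrix (Fin qx) (Fin nx) ℝ) (hx : Fin qx → ℝ)
    (ybar : (i : Fin N) → Fin n → ℝ)
    (Y : (i : Fin N) → Matrix (Fin n) (Fin (ny i)) ℝ)
    (Hy : (i : Fin N) → Matrix (Fin (qy i)) (Fin (ny i)) ℝ)
    (hy : (i : Fin N) → Fin (qy i) → ℝ)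
    (hne : {p : Fin nx → ℝ | Hx.mulVec p ≤ hx}.Nonempty)
    (lam : Fin N → ℝ)
    (xbari : Fin N → Fin n → ℝ)
    (Xi : Fin N → Matrix (Fin n) (Fin nx) ℝ)
    (hlam : ∀ i, 0 ≤ lam i)
    (hsumlam : ∑ i, lam i = 1)
    (hincl : ∀ i,
      (fun p => xbari i + (Xi i).mulVec p) '' {p : Fin nx → ℝ | Hx.mulVec p ≤ hx}
        ⊆ lam i • ((fun q => ybar i + (Y i).mulVec q) ''
            {q : Fin (ny i) → ℝ | (Hy i).mulVec q ≤ hy i}))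
    (hsumx : ∑ i, xbari i = xbar)
    (hsumX : ∑ i, Xi i = X) :
    (fun p => xbar + X.mulVec p) '' {p : Fin nx → ℝ | Hx.mulVec p ≤ hx}
      ⊆ convexHull ℝ (⋃ i, (fun q => ybar i + (Y i).mulVec q) ''
          {q : Fin (ny i) → ℝ | (Hy i).mulVec q ≤ hy i}) := by
  rintro _ ⟨p, hp, rfl⟩
  have hmem : ∀ i, xbari i + (Xi i).mulVec p ∈
      lam i • ((fun q => ybar i + (Y i).mulVec q) ''
        {q : Fin (ny i) → ℝ | (Hy i).mulVec q ≤ hy i}) :=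
    fun i => hincl i ⟨p, hp, rfl⟩
  choose c hc hceq using fun i => hmem i
  have key : xbar + X.mulVec p = ∑ i, lam i • c i := by
    have : ∀ i, lam i • c i = xbari i + (Xi i).mulVec p := hceq
    have hX : X.mulVec p = ∑ i, (Xi i).mulVec p := by
      rw [← hsumX]; ext j
      simp [Matrix.mulVec, dotProduct, Finset.sum_apply, Finset.sum_mul,
        Matrix.sum_apply]
      rw [Finset.sum_comm]
    simp_rw [this, Finset.sum_add_distrib, hsumx, hX]
  show xbar + X.mulVec p ∈ _
  rw [key]
  exact (convex_convexHull ℝ _).sum_mem (fun i _ => hlam i) hsumlam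
    (fun i _ => subset_convexHull ℝ _ (Set.mem_iUnion.2 ⟨i, hc i⟩))
end
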